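/- For a finite non-empty sample space Ω, a closed non-empty subset 𝒬 of the probability measures on Ω, and any probability measure P on Ω, the latent weight satisfies λ_𝒬(P) = sup_{Q ∈ 𝒬} min_{ω ∈ Ω} P(ω)/Q(ω) (with any division by zero, including zero-over-zero, interpreted as +∞), and this supremum is achieved: there exists Q ∈ 𝒬 such that P(ω) ≥ λ_𝒬(P)·Q(ω) for all ω ∈ Ω. -/
import Mathlib


open scoped BigOperators

/-- A function `P : Ω → ℝ` on a finite sample space is a probability measure if it is
nonnegative and sums to one. -/
def IsProb {Ω : Type*} [Fintype Ω] (P : Ω → ℝ) : Prop :=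
  (∀ ω, 0 ≤ P ω) ∧ ∑ ω, P ω = 1

/-- The latent weight of the class `𝒬` in `P`:
`λ_𝒬(P) = sup { λ | P ≥ λ·Q for some Q ∈ 𝒬 }`. -/
noncomputable def latentWeight {Ω : Type*} [Fintype Ω]
    (𝒬 : Set (Ω → ℝ)) (P : Ω → ℝ) : ℝ :=
  sSup {l : ℝ | ∃ Q ∈ 𝒬, ∀ ω, l * Q ω ≤ P ω}

/-- `λ_𝒬(P) = sup_{Q ∈ 𝒬} min_{ω ∈ Ω} P(ω)/Q(ω)`, with any division by zero (including
zero-over-zero) interpreted as `+∞`, and the supremum is achieved: some `Q ∈ 𝒬` satisfies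
`P ≥ λ_𝒬(P)·Q`. -/
theorem stmt1 {Ω : Type*} [Fintype Ω] [Nonempty Ω]
    (𝒬 : Set (Ω → ℝ)) (h𝒬prob : ∀ Q ∈ 𝒬, IsProb Q)
    (h𝒬closed : IsClosed 𝒬) (h𝒬ne : 𝒬.Nonempty)
    (P : Ω → ℝ) (hP : IsProb P) :
    ((latentWeight 𝒬 P : EReal) =
        ⨆ Q ∈ 𝒬, ⨅ ω : Ω, (if Q ω = 0 then (⊤ : EReal) else ((P ω / Q ω : ℝ) : EReal))) ∧
    ∃ Q ∈ 𝒬, ∀ ω, latentWeight 𝒬 P * Q ω ≤ P ω := by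
  classical
  set S : Set ℝ := {l : ℝ | ∃ Q ∈ 𝒬, ∀ ω, l * Q ω ≤ P ω} with hS
  obtain ⟨Q₀, hQ₀⟩ := h𝒬ne
  have hS0 : (0 : ℝ) ∈ S := ⟨Q₀, hQ₀, fun ω => by simpa using hP.1 ω⟩
  have hSne : S.Nonempty := ⟨0, hS0⟩
  have hSbdd : BddAbove S := by
    refine ⟨1, fun l hl => ?_⟩
    obtain ⟨Q, hQ, hle⟩ := hl
    have h1 : ∑ ω, l * Q ω ≤ ∑ ω, P ω := Finset.sum_le_sum fun ω _ => hle ω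
    rw [← Finset.mul_sum, (h𝒬prob Q hQ).2, hP.2, mul_one] at h1
    exact h1
  set lam : ℝ := latentWeight 𝒬 P with hlam
  have hlamS : lam = sSup S := rfl
  -- 𝒬 is compact
  have hsub : 𝒬 ⊆ Set.univ.pi (fun _ : Ω => Set.Icc (0:ℝ) 1) := by
    intro Q hQ ω _
    refine ⟨(h𝒬prob Q hQ).1 ω, ?_⟩
    have := Finset.single_le_sum (f := Q) (fun i _ => (h𝒬prob Q hQ).1 i)
      (Finset.mem_univ ω)
    rw [(h𝒬prob Q hQ).2] at this
    exact this
  have h𝒬comp : IsCompact 𝒬 :=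
    (isCompact_univ_pi fun _ => isCompact_Icc).of_isClosed_subset h𝒬closed hsub
  -- the nested family
  set K : ℕ → Set (Ω → ℝ) :=
    fun n => {Q | Q ∈ 𝒬 ∧ ∀ ω, (lam - 1 / (n + 1)) * Q ω ≤ P ω} with hK
  have hKclosed : ∀ n, IsClosed (K n) := by
    intro n
    have : K n = 𝒬 ∩ ⋂ ω : Ω, {Q : Ω → ℝ | (lam - 1 / (n + 1)) * Q ω ≤ P ω} := by
      ext Q; simp [hK, Set.mem_iInter]
    rw [this]
    exact h𝒬closed.inter (isClosed_iInter fun ω =>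
      isClosed_le (continuous_const.mul (continuous_apply ω)) continuous_const)
  have hKne : ∀ n, (K n).Nonempty := by
    intro n
    have hlt : lam - 1 / (n + 1) < sSup S := by
      rw [← hlamS]
      have : (0:ℝ) < 1 / (n + 1) := by positivity
      linarith
    obtain ⟨l, hlS, hll⟩ := exists_lt_of_lt_csSup hSne hlt
    obtain ⟨Q, hQ, hle⟩ := hlS
    refine ⟨Q, hQ, fun ω => ?_⟩
    calc (lam - 1 / (n + 1)) * Q ω ≤ l * Q ω :=
          mul_le_mul_of_nonneg_right hll.le ((h𝒬prob Q hQ).1 ω)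
      _ ≤ P ω := hle ω
  have hKmono : ∀ n, K (n + 1) ⊆ K n := by
    intro n Q hQ
    refine ⟨hQ.1, fun ω => ?_⟩
    have h1 : (1 : ℝ) / (n + 1 + 1) ≤ 1 / (n + 1) := by
      apply one_div_le_one_div_of_le <;> push_cast <;> linarith
    calc (lam - 1 / (n + 1)) * Q ω ≤ (lam - 1 / (n + 1 + 1)) * Q ω := by
          apply mul_le_mul_of_nonneg_right _ ((h𝒬prob Q hQ.1).1 ω); linarith
      _ ≤ P ω := by simpa using hQ.2 ω
  obtain ⟨Qs, hQs⟩ := IsCompact.nonempty_iInter_of_sequence_nonempty_isCompact_isClosed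
    K hKmono hKne ((h𝒬comp.of_isClosed_subset (hKclosed 0)) fun Q hQ => hQ.1) hKclosed
  simp only [Set.mem_iInter] at hQs
  have hQs𝒬 : Qs ∈ 𝒬 := (hQs 0).1
  have hach : ∀ ω, lam * Qs ω ≤ P ω := by
    intro ω
    have htend : Filter.Tendsto (fun n : ℕ => (lam - 1 / (n + 1)) * Qs ω) Filter.atTop
        (nhds (lam * Qs ω)) := by
      have := (tendsto_const_nhds (x := lam) (f := Filter.atTop (α := ℕ))).sub
        tendsto_one_div_add_atTop_nhds_zero_nat
      simpa using this.mul_const (Qs ω)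
    exact le_of_tendsto' htend fun n => (hQs n).2 ω
  refine ⟨?_, Qs, hQs𝒬, hach⟩
  -- the EReal equality
  apply le_antisymm
  · refine le_iSup₂_of_le Qs hQs𝒬 (le_iInf fun ω => ?_)
    by_cases h0 : Qs ω = 0
    · simp [h0]
    · have hpos : 0 < Qs ω := lt_of_le_of_ne ((h𝒬prob Qs hQs𝒬).1 ω) (Ne.symm h0)
      simp only [h0, if_false, EReal.coe_le_coe_iff]
      rw [le_div_iff₀ hpos]
      exact hach ω
  · refine iSup₂_le fun Q hQ => ?_
    -- the set of ω with Q ω ≠ 0 is nonempty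
    have hTne : (Finset.univ.filter (fun ω => Q ω ≠ 0)).Nonempty := by
      by_contra h
      rw [Finset.not_nonempty_iff_eq_empty, Finset.filter_eq_empty_iff] at h
      have : ∑ ω, Q ω = 0 := Finset.sum_eq_zero fun ω _ => by
        have := h (Finset.mem_univ ω); simpa using this
      rw [(h𝒬prob Q hQ).2] at this; norm_num at this
    set T := Finset.univ.filter (fun ω => Q ω ≠ 0) with hT
    set r : ℝ := T.inf' hTne (fun ω => P ω / Q ω) with hr
    have hrS : r ∈ S := by
      refine ⟨Q, hQ, fun ω => ?_⟩
      by_cases h0 : Q ω = 0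
      · rw [h0, mul_zero]; exact hP.1 ω
      · have hpos : 0 < Q ω := lt_of_le_of_ne ((h𝒬prob Q hQ).1 ω) (Ne.symm h0)
        have hmem : ω ∈ T := by simp [hT, h0]
        have := Finset.inf'_le (fun ω => P ω / Q ω) hmem
        rw [← le_div_iff₀ hpos]
        exact this
    have hrlam : r ≤ lam := le_csSup hSbdd hrS
    obtain ⟨ωs, hωsT, hωs⟩ := Finset.exists_mem_eq_inf' hTne (fun ω => P ω / Q ω)
    have hωsne : Q ωs ≠ 0 := by simpa [hT] using hωsT
    calc (⨅ ω : Ω, if Q ω = 0 then (⊤ : EReal) else ((P ω / Q ω : ℝ) : EReal))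
        ≤ (if Q ωs = 0 then (⊤ : EReal) else ((P ωs / Q ωs : ℝ) : EReal)) := iInf_le _ _
      _ = ((r : ℝ) : EReal) := by rw [if_neg hωsne, ← hωs]
      _ ≤ (lam : EReal) := EReal.coe_le_coe_iff.mpr hrlam
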